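/- Let $R$ be a root system with simple roots $S$, let $\alpha \in S$ be such that the fundamental weight $\varpi_\alpha$ is minuscule (i.e. $\langle \varpi_\alpha, \beta^\vee\rangle \le 1$ for all $\beta \in R^+$), let $I = S \setminus \{\alpha\}$, and let $w \in W$ be a minimal-length representative of its coset in $W/W_I$ (i.e. $w(I) \subseteq R^+$). Then for any two positive roots $\mu, \nu$ with $w^{-1}(\mu) \in R^-$ and $w^{-1}(\nu) \in R^-$, one has $\langle \mu, \nu^\vee \rangle \ge 0$. -/

import Mathlib

open scoped RealInnerProductSpace

noncomputable section

variable {V : Type} [NormedAddCommGroup V] [InnerProductSpace ℝ V]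

/-- The reflection of `V` in the hyperplane orthogonal to `α`
(the identity map when `α = 0`). -/
def reflVec (α : V) : V ≃ₗ[ℝ] V where
  toFun x := x - (2 * ⟪x, α⟫ / ⟪α, α⟫) • α
  invFun x := x - (2 * ⟪x, α⟫ / ⟪α, α⟫) • α
  map_add' x y := by
    try dsimp only
    have h : 2 * ⟪x + y, α⟫ / ⟪α, α⟫ = 2 * ⟪x, α⟫ / ⟪α, α⟫ + 2 * ⟪y, α⟫ / ⟪α, α⟫ := by
      rw [inner_add_left]; ring
    rw [h, add_smul]; abel
  map_smul' r x := by
    try dsimp only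
    have h : 2 * ⟪r • x, α⟫ / ⟪α, α⟫ = r * (2 * ⟪x, α⟫ / ⟪α, α⟫) := by
      rw [real_inner_smul_left]; ring
    simp only [RingHom.id_apply]
    rw [h, mul_smul, smul_sub]
  left_inv x := by
    dsimp only
    by_cases h : (⟪α, α⟫ : ℝ) = 0
    · simp [inner_self_eq_zero.mp h]
    · have h2 : 2 * ⟪x - (2 * ⟪x, α⟫ / ⟪α, α⟫) • α, α⟫ / ⟪α, α⟫
          = -(2 * ⟪x, α⟫ / ⟪α, α⟫) := by
        rw [inner_sub_left, real_inner_smul_left]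
        field_simp
        ring
      rw [h2, neg_smul, sub_neg_eq_add, sub_add_cancel]
  right_inv x := by
    dsimp only
    by_cases h : (⟪α, α⟫ : ℝ) = 0
    · simp [inner_self_eq_zero.mp h]
    · have h2 : 2 * ⟪x - (2 * ⟪x, α⟫ / ⟪α, α⟫) • α, α⟫ / ⟪α, α⟫
          = -(2 * ⟪x, α⟫ / ⟪α, α⟫) := by
        rw [inner_sub_left, real_inner_smul_left]
        field_simp
        ring
      rw [h2, neg_smul, sub_neg_eq_add, sub_add_cancel]

/-- The pairing `⟨x, y^∨⟩ = 2(x,y)/(y,y)` of a vector with the coroot of `y`. -/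
def cpair (x y : V) : ℝ := 2 * ⟪x, y⟫ / ⟪y, y⟫

/-- A (reduced, crystallographic) root system in a real inner product space,
together with a chosen system of simple roots. -/
structure RootSystemData (V : Type) [NormedAddCommGroup V] [InnerProductSpace ℝ V] where
  roots : Finset V
  simples : Finset V
  simples_subset : simples ⊆ roots
  root_ne_zero : ∀ α ∈ roots, α ≠ 0
  pairing_int : ∀ α ∈ roots, ∀ β ∈ roots, ∃ n : ℤ, (n : ℝ) = cpair α β
  reflect_mem : ∀ α ∈ roots, ∀ β ∈ roots, reflVec α β ∈ roots
  reduced : ∀ α ∈ roots, ∀ t : ℝ, t • α ∈ roots → t = 1 ∨ t = -1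
  simples_indep : LinearIndependent ℝ (fun a : {x // x ∈ simples} => (a : V))
  root_pos_or_neg : ∀ β ∈ roots,
    (∃ c : V → ℕ, β = ∑ α ∈ simples, (c α : ℝ) • α) ∨
    (∃ c : V → ℕ, -β = ∑ α ∈ simples, (c α : ℝ) • α)

namespace RootSystemData

/-- `v` is a non-negative integer combination of the elements of `I`. -/
def IsPosCombOf (P : RootSystemData V) (I : Finset V) (v : V) : Prop :=
  ∃ c : V → ℕ, v = ∑ α ∈ I, (c α : ℝ) • α

/-- `v` is a non-negative integer combination of the simple roots. -/
def IsPosComb (P : RootSystemData V) (v : V) : Prop := P.IsPosCombOf P.simples v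

/-- The set of positive roots. -/
def Pos (P : RootSystemData V) : Set V := {β | β ∈ P.roots ∧ P.IsPosComb β}

/-- The set of negative roots. -/
def Neg (P : RootSystemData V) : Set V := {β | -β ∈ P.Pos}

/-- The positive roots lying in the root subsystem generated by `I`. -/
def PosOf (P : RootSystemData V) (I : Finset V) : Set V := {β | β ∈ P.roots ∧ P.IsPosCombOf I β}

/-- The half sum of the positive roots. -/
def rho (P : RootSystemData V) : V := (2 : ℝ)⁻¹ • ∑ᶠ β ∈ P.Pos, β

/-- The half sum of the positive roots in the root subsystem generated by `I`. -/
def rhoOf (P : RootSystemData V) (I : Finset V) : V := (2 : ℝ)⁻¹ • ∑ᶠ β ∈ P.PosOf I, β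

/-- The parabolic subgroup of the Weyl group generated by the reflections
in the elements of `I`. -/
def WeylOf (P : RootSystemData V) (I : Finset V) : Subgroup (V ≃ₗ[ℝ] V) :=
  Subgroup.closure (reflVec '' (I : Set V))

/-- The Weyl group, generated by the simple reflections. -/
def Weyl (P : RootSystemData V) : Subgroup (V ≃ₗ[ℝ] V) := P.WeylOf P.simples

/-- `l` is a word with letters in `I` whose associated product of reflections is `w`. -/
def IsWordOf (P : RootSystemData V) (I : Finset V) (l : List V) (w : V ≃ₗ[ℝ] V) : Prop :=
  (∀ α ∈ l, α ∈ I) ∧ (l.map reflVec).prod = w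

/-- The length of `w` with respect to the reflections in the elements of `I`. -/
def lengthOf (P : RootSystemData V) (I : Finset V) (w : V ≃ₗ[ℝ] V) : ℕ :=
  sInf {n | ∃ l, P.IsWordOf I l w ∧ l.length = n}

/-- The Coxeter length of `w` with respect to the simple reflections. -/
def length (P : RootSystemData V) (w : V ≃ₗ[ℝ] V) : ℕ := P.lengthOf P.simples w

/-- `l` is a reduced decomposition of `w` into simple reflections. -/
def IsReducedWord (P : RootSystemData V) (l : List V) (w : V ≃ₗ[ℝ] V) : Prop :=
  P.IsWordOf P.simples l w ∧ l.length = P.length w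

/-- The partial order on the root lattice: `x ≤ y` iff `y - x` is a non-negative
integer combination of simple roots. -/
def rootLE (P : RootSystemData V) (x y : V) : Prop := P.IsPosComb (y - x)

/-- The root system is simply laced: all roots have the same length. -/
def SimplyLaced (P : RootSystemData V) : Prop := ∀ α ∈ P.roots, ∀ β ∈ P.roots, ⟪α, α⟫ = ⟪β, β⟫

/-- The root system is irreducible: it admits no decomposition into two
non-empty mutually orthogonal parts. -/
def Irred (P : RootSystemData V) : Prop :=
  ∀ A B : Set V, (P.roots : Set V) ⊆ A ∪ B →
    (∀ a ∈ A ∩ (P.roots : Set V), ∀ b ∈ B ∩ (P.roots : Set V), ⟪a, b⟫ = 0) →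
    A ∩ (P.roots : Set V) = ∅ ∨ B ∩ (P.roots : Set V) = ∅

/-- `ϖ` is the fundamental weight associated with the simple root `α`. -/
def IsFundamentalWeight (P : RootSystemData V) (α ϖ : V) : Prop :=
  cpair ϖ α = 1 ∧ ∀ γ ∈ P.simples, γ ≠ α → cpair ϖ γ = 0

/-- The weight `ϖ` is minuscule: it pairs with every positive coroot by at most `1`. -/
def IsMinusculeWeight (P : RootSystemData V) (ϖ : V) : Prop := ∀ β ∈ P.Pos, cpair ϖ β ≤ 1

/-- The support of `w`: the set of simple roots whose reflections occur in a
reduced decomposition of `w`. -/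
def Supp (P : RootSystemData V) (w : V ≃ₗ[ℝ] V) : Set V :=
  {δ | δ ∈ P.simples ∧ ∃ l, P.IsReducedWord l w ∧ δ ∈ l}

end RootSystemData


section Aux

open RootSystemData

lemma reflVec_apply (a x : V) : reflVec a x = x - (2 * ⟪x, a⟫ / ⟪a, a⟫) • a := rfl

lemma inner_reflVec (a x y : V) : ⟪reflVec a x, reflVec a y⟫ = ⟪x, y⟫ := by
  rcases eq_or_ne a 0 with rfl | ha
  · simp [reflVec_apply]
  · have h : (⟪a, a⟫ : ℝ) ≠ 0 := fun h => ha (inner_self_eq_zero.mp h)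
    simp only [reflVec_apply, inner_sub_left, inner_sub_right, real_inner_smul_left,
      real_inner_smul_right]
    rw [real_inner_comm a x, real_inner_comm a y]
    field_simp
    ring

lemma root_self_pos (P : RootSystemData V) {γ : V} (hγ : γ ∈ P.roots) : (0:ℝ) < ⟪γ, γ⟫ := by
  rw [real_inner_self_eq_norm_sq]
  exact pow_pos (norm_pos_iff.mpr (P.root_ne_zero γ hγ)) 2

lemma neg_mem_roots (P : RootSystemData V) {γ : V} (hγ : γ ∈ P.roots) : -γ ∈ P.roots := by
  have h := P.reflect_mem γ hγ γ hγ
  have h0 : (⟪γ, γ⟫ : ℝ) ≠ 0 := (root_self_pos P hγ).ne'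
  rw [reflVec_apply] at h
  have h2 : 2 * ⟪γ, γ⟫ / ⟪γ, γ⟫ = (2:ℝ) := by field_simp
  rw [h2, two_smul] at h
  have h3 : γ - (γ + γ) = -γ := by abel
  rwa [h3] at h

lemma coeff_zero (P : RootSystemData V) (f : V → ℝ)
    (h : ∑ δ ∈ P.simples, f δ • δ = 0) : ∀ δ ∈ P.simples, f δ = 0 := by
  intro δ hδ
  have key := Fintype.linearIndependent_iff.mp P.simples_indep
    (fun a : {x // x ∈ P.simples} => f a)
  have hsum : ∑ i : {x // x ∈ P.simples}, f (i : V) • (i : V) = 0 := by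
    rw [Finset.sum_coe_sort P.simples (fun δ => f δ • δ)]; exact h
  exact key hsum ⟨δ, hδ⟩

lemma coeff_unique (P : RootSystemData V) (f g : V → ℝ)
    (h : ∑ δ ∈ P.simples, f δ • δ = ∑ δ ∈ P.simples, g δ • δ) :
    ∀ δ ∈ P.simples, f δ = g δ := by
  intro δ hδ
  have h0 : ∑ δ ∈ P.simples, (f δ - g δ) • δ = 0 := by
    simp only [sub_smul, Finset.sum_sub_distrib, h, sub_self]
  have := coeff_zero P (fun δ => f δ - g δ) h0 δ hδ
  linarith

lemma not_pos_and_neg (P : RootSystemData V) {v : V} (h1 : v ∈ P.Pos) (h2 : -v ∈ P.Pos) :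
    False := by
  obtain ⟨c, hc⟩ := h1.2
  obtain ⟨d, hd⟩ := h2.2
  have hsum : ∑ δ ∈ P.simples, ((c δ : ℝ) + (d δ : ℝ)) • δ = 0 := by
    simp only [add_smul, Finset.sum_add_distrib, ← hc, ← hd]
    abel
  have hv : v = 0 := by
    rw [hc]
    apply Finset.sum_eq_zero
    intro δ hδ
    have h := coeff_zero P _ hsum δ hδ
    have h1' : (0:ℝ) ≤ (c δ : ℝ) := Nat.cast_nonneg _
    have h2' : (0:ℝ) ≤ (d δ : ℝ) := Nat.cast_nonneg _
    have hc0 : (c δ : ℝ) = 0 := by linarith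
    rw [hc0, zero_smul]
  exact P.root_ne_zero v h1.1 hv

lemma isPosComb_add (P : RootSystemData V) {u v : V} (hu : P.IsPosComb u)
    (hv : P.IsPosComb v) : P.IsPosComb (u + v) := by
  obtain ⟨c, hc⟩ := hu
  obtain ⟨d, hd⟩ := hv
  refine ⟨fun δ => c δ + d δ, ?_⟩
  rw [hc, hd, ← Finset.sum_add_distrib]
  apply Finset.sum_congr rfl
  intro δ _
  push_cast
  rw [add_smul]

lemma isPosComb_nsmul (P : RootSystemData V) {v : V} (n : ℕ) (hv : P.IsPosComb v) :
    P.IsPosComb ((n : ℝ) • v) := by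
  obtain ⟨c, hc⟩ := hv
  refine ⟨fun δ => n * c δ, ?_⟩
  rw [hc, Finset.smul_sum]
  apply Finset.sum_congr rfl
  intro δ _
  push_cast
  rw [smul_smul]

lemma isPosComb_sum (P : RootSystemData V) (T : Finset V) (g : V → V) (c : V → ℕ)
    (h : ∀ δ ∈ T, P.IsPosComb (g δ)) :
    P.IsPosComb (∑ δ ∈ T, (c δ : ℝ) • g δ) := by
  classical
  induction T using Finset.induction_on with
  | empty => exact ⟨fun _ => 0, by simp⟩
  | insert a s hnot ih =>
    rw [Finset.sum_insert hnot]
    exact isPosComb_add P (isPosComb_nsmul P (c a) (h a (Finset.mem_insert_self a s)))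
      (ih fun δ hδ => h δ (Finset.mem_insert_of_mem hδ))

lemma weyl_prop (P : RootSystemData V) [DecidableEq V] {w : V ≃ₗ[ℝ] V} (hw : w ∈ P.Weyl) :
    (∀ x y : V, ⟪w x, w y⟫ = ⟪x, y⟫) ∧ (∀ γ ∈ P.roots, w γ ∈ P.roots) := by
  refine Subgroup.closure_induction ?_ ?_ ?_ ?_ hw
  · rintro x ⟨δ, hδ, rfl⟩
    exact ⟨fun a b => inner_reflVec δ a b,
      fun γ hγ => P.reflect_mem δ (P.simples_subset hδ) γ hγ⟩
  · exact ⟨fun x y => rfl, fun γ hγ => hγ⟩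
  · rintro x y - - ⟨hx1, hx2⟩ ⟨hy1, hy2⟩
    exact ⟨fun a b => by rw [show (x*y) a = x (y a) from rfl, show (x*y) b = x (y b) from rfl,
      hx1, hy1], fun γ hγ => hx2 _ (hy2 γ hγ)⟩
  · rintro x - ⟨hx1, hx2⟩
    have himg : P.roots.image x = P.roots := by
      apply Finset.eq_of_subset_of_card_le
      · intro a ha
        obtain ⟨γ, hγ, rfl⟩ := Finset.mem_image.mp ha
        exact hx2 γ hγ
      · rw [Finset.card_image_of_injective _ x.injective]
    constructor
    · intro a b
      have h := hx1 (x⁻¹ a) (x⁻¹ b)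
      rw [show x (x⁻¹ a) = a from x.apply_symm_apply a,
        show x (x⁻¹ b) = b from x.apply_symm_apply b] at h
      exact h.symm
    · intro γ hγ
      rw [← himg] at hγ
      obtain ⟨β, hβ, rfl⟩ := Finset.mem_image.mp hγ
      rwa [show x⁻¹ (x β) = β from x.symm_apply_apply β]

lemma coroot_int_aux (P : RootSystemData V) [DecidableEq V] :
    ∀ n : ℕ, ∀ γ ∈ P.roots, ∀ c : V → ℕ, γ = ∑ δ ∈ P.simples, (c δ : ℝ) • δ →
      (∑ δ ∈ P.simples, c δ) = n →
      ∃ m : V → ℤ, (2 / ⟪γ, γ⟫) • γ = ∑ δ ∈ P.simples, (m δ : ℝ) • ((2 / ⟪δ, δ⟫) • δ) := by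
  intro n
  induction n using Nat.strong_induction_on with
  | _ n ih =>
  intro γ hγ c hc hn
  by_cases hsimp : γ ∈ P.simples
  · refine ⟨fun δ => if δ = γ then 1 else 0, ?_⟩
    rw [Finset.sum_eq_single γ (fun b _ hb => by simp [hb]) (fun h => absurd hsimp h)]
    simp
  · have hγγ : (0:ℝ) < ⟪γ, γ⟫ := root_self_pos P hγ
    have hexp : ⟪γ, γ⟫ = ∑ δ ∈ P.simples, (c δ : ℝ) * ⟪δ, γ⟫ := by
      rw [show (⟪γ, γ⟫:ℝ) = ⟪∑ δ ∈ P.simples, (c δ : ℝ) • δ, γ⟫ from by rw [← hc], sum_inner]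
      exact Finset.sum_congr rfl fun δ _ => real_inner_smul_left δ γ (c δ)
    have hex : ∃ δ ∈ P.simples, 0 < (c δ : ℝ) * ⟪δ, γ⟫ := by
      by_contra hno
      push_neg at hno
      have : ⟪γ, γ⟫ ≤ 0 := hexp ▸ Finset.sum_nonpos hno
      linarith
    obtain ⟨δ, hδS, hδpos⟩ := hex
    have hδroot : δ ∈ P.roots := P.simples_subset hδS
    have hδδ : (0:ℝ) < ⟪δ, δ⟫ := root_self_pos P hδroot
    have hcδ : (0:ℝ) < (c δ : ℝ) := by
      rcases Nat.eq_zero_or_pos (c δ) with h | h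
      · rw [h] at hδpos; simp at hδpos
      · exact_mod_cast h
    have hγδ : (0:ℝ) < ⟪γ, δ⟫ := by
      rw [real_inner_comm]
      nlinarith [hδpos, hcδ]
    obtain ⟨k, hk⟩ := P.pairing_int γ hγ δ hδroot
    have hk0 : (0:ℝ) < (k:ℝ) := by
      rw [hk]
      exact div_pos (by linarith) hδδ
    have hk1 : 1 ≤ k := by
      have : (0:ℤ) < k := by exact_mod_cast hk0
      omega
    set γ' := reflVec δ γ with hγ'def
    have hγ'root : γ' ∈ P.roots := P.reflect_mem δ hδroot γ hγ
    have hγ'eq : γ' = γ - (k:ℝ) • δ := by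
      rw [hγ'def, reflVec_apply, hk]
      rfl
    have hγ'γ' : ⟪γ', γ'⟫ = ⟪γ, γ⟫ := inner_reflVec δ γ γ
    have hγ'exp : γ' = ∑ η ∈ P.simples, ((c η : ℝ) - (if η = δ then (k:ℝ) else 0)) • η := by
      have hsub : ∑ η ∈ P.simples, ((c η : ℝ) - (if η = δ then (k:ℝ) else 0)) • η
          = (∑ η ∈ P.simples, (c η : ℝ) • η)
            - ∑ η ∈ P.simples, (if η = δ then (k:ℝ) else 0) • η := by
        rw [← Finset.sum_sub_distrib]
        exact Finset.sum_congr rfl fun η _ => sub_smul _ _ _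
      have hit : ∑ η ∈ P.simples, (if η = δ then (k:ℝ) else 0) • η = (k:ℝ) • δ := by
        rw [Finset.sum_eq_single δ (fun b _ hb => by simp [hb]) (fun h => absurd hδS h)]
        simp
      rw [hsub, hit, ← hc, ← hγ'eq]
    have hother : ∃ η ∈ P.simples, η ≠ δ ∧ c η ≠ 0 := by
      by_contra hno
      push_neg at hno
      have heq : γ = (c δ : ℝ) • δ := by
        rw [hc, Finset.sum_eq_single δ (fun b hb hbδ => by rw [hno b hb hbδ]; simp)
          (fun h => absurd hδS h)]
      have hred := P.reduced δ hδroot (c δ : ℝ) (by rw [← heq]; exact hγ)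
      rcases hred with h1 | h2
      · rw [h1, one_smul] at heq
        exact hsimp (heq ▸ hδS)
      · rw [h2] at hcδ
        linarith
    obtain ⟨η, hηS, hηδ, hηne⟩ := hother
    have hγ'pos : ∃ e : V → ℕ, γ' = ∑ δ ∈ P.simples, (e δ : ℝ) • δ := by
      rcases P.root_pos_or_neg γ' hγ'root with ⟨e, he⟩ | ⟨d, hd⟩
      · exact ⟨e, he⟩
      · exfalso
        have hcomb : ∑ τ ∈ P.simples,
            (((c τ : ℝ) - (if τ = δ then (k:ℝ) else 0)) + (d τ : ℝ)) • τ = 0 := by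
          simp only [add_smul, Finset.sum_add_distrib, ← hγ'exp, ← hd]
          abel
        have h := coeff_zero P _ hcomb η hηS
        simp only [if_neg hηδ, sub_zero] at h
        have h1 : (0:ℝ) ≤ (c η : ℝ) := Nat.cast_nonneg _
        have h2 : (0:ℝ) ≤ (d η : ℝ) := Nat.cast_nonneg _
        have h3 : (c η : ℝ) = 0 := by linarith
        exact hηne (by exact_mod_cast h3)
    obtain ⟨e, he⟩ := hγ'pos
    have hcc : ∑ τ ∈ P.simples, (e τ : ℝ) • τ
        = ∑ τ ∈ P.simples, ((c τ : ℝ) - (if τ = δ then (k:ℝ) else 0)) • τ := by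
      rw [← he, ← hγ'exp]
    have hcoeff : ∀ τ ∈ P.simples, (e τ : ℝ) = (c τ : ℝ) - (if τ = δ then (k:ℝ) else 0) :=
      fun τ hτ => coeff_unique P _ _ hcc τ hτ
    have heδ : (e δ : ℝ) = (c δ : ℝ) - (k:ℝ) := by
      have h := hcoeff δ hδS
      simpa using h
    have heτ : ∀ τ ∈ P.simples, τ ≠ δ → e τ = c τ := by
      intro τ hτ hτδ
      have h := hcoeff τ hτ
      simp only [if_neg hτδ, sub_zero] at h
      exact_mod_cast h
    have hknn : (0:ℤ) ≤ k := by omega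
    have heδnat : e δ + k.toNat = c δ := by
      have h : (e δ : ℝ) + (k.toNat : ℝ) = (c δ : ℝ) := by
        have h2 : ((k.toNat : ℤ) : ℝ) = (k : ℝ) := by rw [Int.toNat_of_nonneg hknn]
        push_cast at h2 ⊢
        rw [heδ]
        linarith
      exact_mod_cast h
    have hkt : 0 < k.toNat := by omega
    have hht : ∑ τ ∈ P.simples, e τ < n := by
      rw [← hn]
      apply Finset.sum_lt_sum
      · intro i hi
        by_cases h : i = δ
        · subst h; omega
        · rw [heτ i hi h]
      · exact ⟨δ, hδS, by omega⟩
    obtain ⟨m', hm'⟩ := ih (∑ τ ∈ P.simples, e τ) hht γ' hγ'root e he rfl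
    rw [hγ'γ'] at hm'
    obtain ⟨j, hj⟩ := P.pairing_int δ hδroot γ hγ
    refine ⟨fun τ => m' τ + (if τ = δ then j else 0), ?_⟩
    have hsplit : ∑ τ ∈ P.simples, (((m' τ + (if τ = δ then j else 0) : ℤ)) : ℝ) •
        ((2 / ⟪τ, τ⟫) • τ)
        = (∑ τ ∈ P.simples, (m' τ : ℝ) • ((2 / ⟪τ, τ⟫) • τ))
          + (j:ℝ) • ((2 / ⟪δ, δ⟫) • δ) := by
      have hterm : ∀ τ ∈ P.simples, (((m' τ + (if τ = δ then j else 0) : ℤ)) : ℝ) •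
          ((2 / ⟪τ, τ⟫) • τ)
          = (m' τ : ℝ) • ((2 / ⟪τ, τ⟫) • τ)
            + (if τ = δ then ((j:ℝ) • ((2 / ⟪δ, δ⟫) • δ)) else 0) := by
        intro τ _
        by_cases h : τ = δ
        · subst h
          simp only [if_pos rfl]
          push_cast
          rw [add_smul]
        · simp only [if_neg h]
          push_cast
          rw [add_zero, add_zero]
      rw [Finset.sum_congr rfl hterm, Finset.sum_add_distrib,
        Finset.sum_ite_eq' P.simples δ (fun _ => (j:ℝ) • ((2 / ⟪δ, δ⟫) • δ)), if_pos hδS]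
    rw [hsplit, ← hm']
    have hscal : (2 / ⟪γ, γ⟫) * (k:ℝ) = (j:ℝ) * (2 / ⟪δ, δ⟫) := by
      rw [hk, hj]
      unfold cpair
      rw [real_inner_comm δ γ]
      field_simp
    have hγeq : γ = γ' + (k:ℝ) • δ := by rw [hγ'eq]; abel
    calc (2 / ⟪γ, γ⟫) • γ = (2 / ⟪γ, γ⟫) • γ' + ((2 / ⟪γ, γ⟫) * (k:ℝ)) • δ := by
          rw [← smul_smul, ← smul_add, ← hγeq]
      _ = (2 / ⟪γ, γ⟫) • γ' + (j:ℝ) • ((2 / ⟪δ, δ⟫) • δ) := by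
          rw [hscal, smul_smul]

lemma cpair_weight_int (P : RootSystemData V) [DecidableEq V] {α ϖ : V} (hα : α ∈ P.simples)
    (hfw : P.IsFundamentalWeight α ϖ) {γ : V} (hγ : γ ∈ P.Pos) : ∃ m : ℤ, cpair ϖ γ = m := by
  have hγr := hγ.1
  obtain ⟨c, hc⟩ := hγ.2
  obtain ⟨m, hm⟩ := coroot_int_aux P (∑ δ ∈ P.simples, c δ) γ hγr c hc rfl
  refine ⟨m α, ?_⟩
  have h1 : cpair ϖ γ = ⟪ϖ, (2 / ⟪γ, γ⟫) • γ⟫ := by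
    rw [real_inner_smul_right]; unfold cpair; ring
  rw [h1, hm, inner_sum]
  have h2 : ∀ δ ∈ P.simples, ⟪ϖ, (m δ : ℝ) • ((2 / ⟪δ, δ⟫) • δ)⟫
      = (if δ = α then (m δ : ℝ) else 0) := by
    intro δ hδ
    rw [real_inner_smul_right, real_inner_smul_right]
    by_cases h : δ = α
    · subst h
      rw [if_pos rfl]
      have hfa := hfw.1
      unfold cpair at hfa
      rw [show 2 / ⟪δ, δ⟫ * ⟪ϖ, δ⟫ = 2 * ⟪ϖ, δ⟫ / ⟪δ, δ⟫ from by ring, hfa, mul_one]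
    · rw [if_neg h]
      have hfo := hfw.2 δ hδ h
      unfold cpair at hfo
      rw [show 2 / ⟪δ, δ⟫ * ⟪ϖ, δ⟫ = 2 * ⟪ϖ, δ⟫ / ⟪δ, δ⟫ from by ring, hfo, mul_zero]
  rw [Finset.sum_congr rfl h2,
    Finset.sum_eq_single α (fun b _ hb => if_neg hb) (fun h => absurd hα h), if_pos rfl]

lemma one_le_cpair_weight (P : RootSystemData V) [DecidableEq V] {α ϖ : V}
    (hα : α ∈ P.simples) (hfw : P.IsFundamentalWeight α ϖ) {w : V ≃ₗ[ℝ] V} (hw : w ∈ P.Weyl)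
    (hWI : ∀ γ ∈ P.simples.erase α, w γ ∈ P.Pos) {γ : V} (hγ : γ ∈ P.Pos)
    (hwγ : -(w γ) ∈ P.Pos) : 1 ≤ cpair ϖ γ := by
  have hγr := hγ.1
  obtain ⟨c, hc⟩ := hγ.2
  have hαα : (0:ℝ) < ⟪α, α⟫ := root_self_pos P (P.simples_subset hα)
  have hϖα : ⟪ϖ, α⟫ = ⟪α, α⟫ / 2 := by
    have h := hfw.1
    unfold cpair at h
    field_simp at h
    linarith
  have hϖδ : ∀ δ ∈ P.simples, δ ≠ α → ⟪ϖ, δ⟫ = 0 := by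
    intro δ hδ hne
    have h := hfw.2 δ hδ hne
    unfold cpair at h
    have hδδ : (⟪δ, δ⟫ : ℝ) ≠ 0 := (root_self_pos P (P.simples_subset hδ)).ne'
    rcases div_eq_zero_iff.mp h with h' | h'
    · linarith
    · exact absurd h' hδδ
  by_cases hcα : c α = 0
  · exfalso
    have hγI : γ = ∑ δ ∈ P.simples.erase α, (c δ : ℝ) • δ := by
      rw [hc, ← Finset.add_sum_erase P.simples (fun δ => (c δ : ℝ) • δ) hα, hcα]
      simp
    have hwγ' : w γ = ∑ δ ∈ P.simples.erase α, (c δ : ℝ) • (w δ) := by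
      rw [hγI, map_sum]
      exact Finset.sum_congr rfl fun δ _ => by rw [map_smul]
    have hPC : P.IsPosComb (w γ) := by
      rw [hwγ']
      exact isPosComb_sum P _ _ _ (fun δ hδ => (hWI δ hδ).2)
    have hwγroot : w γ ∈ P.roots := (weyl_prop P hw).2 γ hγr
    exact not_pos_and_neg P ⟨hwγroot, hPC⟩ hwγ
  · have hϖγ : ⟪ϖ, γ⟫ = (c α : ℝ) * (⟪α, α⟫ / 2) := by
      rw [show (⟪ϖ, γ⟫ : ℝ) = ⟪ϖ, ∑ δ ∈ P.simples, (c δ : ℝ) • δ⟫ from by rw [← hc],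
        inner_sum]
      have h2 : ∀ δ ∈ P.simples,
          ⟪ϖ, (c δ : ℝ) • δ⟫ = (if δ = α then (c δ : ℝ) * (⟪α, α⟫ / 2) else 0) := by
        intro δ hδ
        rw [real_inner_smul_right]
        by_cases h : δ = α
        · subst h; rw [if_pos rfl, hϖα]
        · rw [if_neg h, hϖδ δ hδ h, mul_zero]
      rw [Finset.sum_congr rfl h2,
        Finset.sum_eq_single α (fun b _ hb => if_neg hb) (fun h => absurd hα h), if_pos rfl]
    have hγγ : (0:ℝ) < ⟪γ, γ⟫ := root_self_pos P hγr
    have hcα1 : (1:ℝ) ≤ (c α : ℝ) := by exact_mod_cast Nat.one_le_iff_ne_zero.mpr hcα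
    have hcpos : 0 < cpair ϖ γ := by
      unfold cpair
      apply div_pos _ hγγ
      rw [hϖγ]
      nlinarith
    obtain ⟨m, hm⟩ := cpair_weight_int P hα hfw ⟨hγr, c, hc⟩
    have hm0 : (0:ℝ) < (m:ℝ) := hm ▸ hcpos
    have hm1 : (1:ℤ) ≤ m := by
      have : (0:ℤ) < m := by exact_mod_cast hm0
      omega
    calc (1:ℝ) ≤ (m:ℝ) := by exact_mod_cast hm1
      _ = cpair ϖ γ := hm.symm

lemma add_mem_roots (P : RootSystemData V) {μ ν : V} (hμ : μ ∈ P.roots) (hν : ν ∈ P.roots)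
    (hinner : ⟪μ, ν⟫ < 0) (hne : μ + ν ≠ 0) : μ + ν ∈ P.roots := by
  have hμμ := root_self_pos P hμ
  have hνν := root_self_pos P hν
  obtain ⟨p, hp⟩ := P.pairing_int μ hμ ν hν
  obtain ⟨q, hq⟩ := P.pairing_int ν hν μ hμ
  have hp0 : (p:ℝ) < 0 := by
    rw [hp]; unfold cpair
    exact div_neg_of_neg_of_pos (by linarith) hνν
  have hq0 : (q:ℝ) < 0 := by
    rw [hq]; unfold cpair
    rw [real_inner_comm μ ν]
    exact div_neg_of_neg_of_pos (by linarith) hμμ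
  have hpi : p ≤ -1 := by
    have : p < 0 := by exact_mod_cast hp0
    omega
  have hqi : q ≤ -1 := by
    have : q < 0 := by exact_mod_cast hq0
    omega
  rcases (show p = -1 ∨ q = -1 ∨ (p ≤ -2 ∧ q ≤ -2) from by omega) with h | h | ⟨h1, h2⟩
  · have hrm := P.reflect_mem ν hν μ hμ
    rw [reflVec_apply] at hrm
    have hcp : 2 * ⟪μ, ν⟫ / ⟪ν, ν⟫ = (-1:ℝ) := by
      have h' : ((-1:ℤ):ℝ) = cpair μ ν := by rw [← h]; exact hp
      unfold cpair at h'
      push_cast at h'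
      linarith
    rw [hcp, neg_one_smul, sub_neg_eq_add] at hrm
    exact hrm
  · have hrm := P.reflect_mem μ hμ ν hν
    rw [reflVec_apply] at hrm
    have hcp : 2 * ⟪ν, μ⟫ / ⟪μ, μ⟫ = (-1:ℝ) := by
      have h' : ((-1:ℤ):ℝ) = cpair ν μ := by rw [← h]; exact hq
      unfold cpair at h'
      push_cast at h'
      linarith
    rw [hcp, neg_one_smul, sub_neg_eq_add] at hrm
    rw [add_comm]
    exact hrm
  · exfalso
    have h1r : (p:ℝ) ≤ -2 := by exact_mod_cast h1
    have h2r : (q:ℝ) ≤ -2 := by exact_mod_cast h2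
    rw [hp] at h1r
    rw [hq] at h2r
    unfold cpair at h1r h2r
    rw [real_inner_comm μ ν] at h2r
    have h1' : 2 * ⟪μ, ν⟫ ≤ -2 * ⟪ν, ν⟫ := by
      have := (div_le_iff₀ hνν).mp h1r
      linarith
    have h2' : 2 * ⟪μ, ν⟫ ≤ -2 * ⟪μ, μ⟫ := by
      have := (div_le_iff₀ hμμ).mp h2r
      linarith
    have hsum : ⟪μ + ν, μ + ν⟫ ≤ 0 := by
      rw [real_inner_add_add_self]
      linarith
    rw [real_inner_self_eq_norm_sq] at hsum
    have hn0 : ‖μ + ν‖ = 0 := by nlinarith [norm_nonneg (μ + ν)]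
    exact hne (norm_eq_zero.mp hn0)

end Aux

/-- If `ϖ_α` is minuscule, `I = S \ {α}` and `w` is a minimal-length coset
representative (`w(I) ⊆ R⁺`), then any two positive roots `μ, ν` sent to negative roots by
`w⁻¹` satisfy `⟨μ, ν^∨⟩ ≥ 0`. -/
theorem cpair_nonneg_of_inversions [DecidableEq V] (P : RootSystemData V)
    (α : V) (hα : α ∈ P.simples) (ϖ : V)
    (hfw : P.IsFundamentalWeight α ϖ) (hmin : P.IsMinusculeWeight ϖ)
    (w : V ≃ₗ[ℝ] V) (hw : w ∈ P.Weyl)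
    (hWI : ∀ γ ∈ P.simples.erase α, w γ ∈ P.Pos)
    (μ ν : V) (hμ : μ ∈ P.Pos) (hν : ν ∈ P.Pos)
    (hμ' : w.symm μ ∈ P.Neg) (hν' : w.symm ν ∈ P.Neg) :
    0 ≤ cpair μ ν := by
  by_contra hcon
  push_neg at hcon
  have hμr := hμ.1
  have hνr := hν.1
  have hνν := root_self_pos P hνr
  have hinner : ⟪μ, ν⟫ < 0 := by
    by_contra hge
    push_neg at hge
    have : 0 ≤ cpair μ ν := div_nonneg (by linarith) hνν.le
    linarith
  have hne : μ + ν ≠ 0 := by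
    intro h
    have h2 : ν = -μ := eq_neg_of_add_eq_zero_right h
    rw [h2] at hν
    exact not_pos_and_neg P hμ hν
  have hsum_root : μ + ν ∈ P.roots := add_mem_roots P hμr hνr hinner hne
  have wp := weyl_prop P hw
  have hw' : w⁻¹ ∈ P.Weyl := inv_mem hw
  have wp' := weyl_prop P hw'
  set γμ := -(w.symm μ) with hγμ
  set γν := -(w.symm ν) with hγν
  have hγμP : γμ ∈ P.Pos := hμ'
  have hγνP : γν ∈ P.Pos := hν'
  have hinner2 : ⟪γμ, γν⟫ = ⟪μ, ν⟫ := by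
    rw [hγμ, hγν, inner_neg_neg]
    have h := wp.1 (w.symm μ) (w.symm ν)
    rw [w.apply_symm_apply, w.apply_symm_apply] at h
    exact h.symm
  have hβroot : γμ + γν ∈ P.roots := by
    have heq : γμ + γν = w.symm (-(μ + ν)) := by
      rw [map_neg, map_add, hγμ, hγν]
      abel
    rw [heq]
    exact wp'.2 _ (neg_mem_roots P hsum_root)
  have hβPos : γμ + γν ∈ P.Pos := ⟨hβroot, isPosComb_add P hγμP.2 hγνP.2⟩
  have hwγμ : -(w γμ) ∈ P.Pos := by
    rw [hγμ, map_neg, w.apply_symm_apply, neg_neg]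
    exact hμ
  have hwγν : -(w γν) ∈ P.Pos := by
    rw [hγν, map_neg, w.apply_symm_apply, neg_neg]
    exact hν
  have h1 := one_le_cpair_weight P hα hfw hw hWI hγμP hwγμ
  have h2 := one_le_cpair_weight P hα hfw hw hWI hγνP hwγν
  have hβ1 : cpair ϖ (γμ + γν) ≤ 1 := hmin _ hβPos
  have hγμγμ := root_self_pos P hγμP.1
  have hγνγν := root_self_pos P hγνP.1
  have hββ := root_self_pos P hβroot
  have e1 : ⟪γμ, γμ⟫ ≤ 2 * ⟪ϖ, γμ⟫ := by
    unfold cpair at h1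
    exact (one_le_div hγμγμ).mp h1
  have e2 : ⟪γν, γν⟫ ≤ 2 * ⟪ϖ, γν⟫ := by
    unfold cpair at h2
    exact (one_le_div hγνγν).mp h2
  have e3 : 2 * ⟪ϖ, γμ + γν⟫ ≤ ⟪γμ + γν, γμ + γν⟫ := by
    unfold cpair at hβ1
    exact (div_le_one hββ).mp hβ1
  rw [real_inner_add_add_self, hinner2, inner_add_right] at e3
  linarith
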